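/- For n ≥ 1 and 1 ≤ r < n, the graph G = K_r + complement(K_{n−r}) (the join of a clique on r vertices with an independent set on n−r vertices, i.e., the complete split graph) satisfies μ₁(G) = (r−1)/2 + √(nr − (3r² + 2r − 1)/4). -/

import Mathlib

set_option maxHeartbeats 1600000


open Matrix SimpleGraph

/-- The eigenvalues of the adjacency matrix of `G`, in descending order:
`graphEig G i` is the `(i+1)`-th largest eigenvalue. -/
noncomputable def graphEig {n : ℕ} (G : SimpleGraph (Fin n)) (i : Fin n) : ℝ :=
  letI := Classical.decRel G.Adj
  letI hH : (G.adjMatrix ℝ).IsHermitian := by rw [Matrix.IsHermitian, conjTranspose_eq_transpose_of_trivial]; exact G.isSymm_adjMatrix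
  hH.eigenvalues (Tuple.sort hH.eigenvalues i.rev)

/- Auxiliary lemmas -/

lemma aux_spectrum_eq {n : ℕ} {N : Matrix (Fin n) (Fin n) ℝ} (hN : N.IsHermitian) :
    spectrum ℝ N = Set.range hN.eigenvalues := by
  conv_lhs => rw [hN.spectral_theorem]
  have h1 : (RCLike.ofReal ∘ hN.eigenvalues : Fin n → ℝ) = hN.eigenvalues := rfl
  rw [h1]
  have h2 : spectrum ℝ ((hN.eigenvectorUnitary : Matrix (Fin n) (Fin n) ℝ) *
      Matrix.diagonal hN.eigenvalues * star (hN.eigenvectorUnitary : Matrix (Fin n) (Fin n) ℝ))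
      = spectrum ℝ (Matrix.diagonal hN.eigenvalues) :=
    spectrum.units_conjugate (u := Unitary.toUnits hN.eigenvectorUnitary)
  rw [Unitary.conjStarAlgAut_apply, h2]
  exact spectrum_diagonal _

/-- `graphEig G ⟨0, _⟩` is characterized by being an eigenvalue that dominates
all eigenvalues. -/
lemma graphEig_zero_eq {n : ℕ} (G : SimpleGraph (Fin n)) (hn : 0 < n) (μ : ℝ)
    (hmem : letI := Classical.decRel G.Adj;
      ∃ x : Fin n → ℝ, x ≠ 0 ∧ G.adjMatrix ℝ *ᵥ x = μ • x)
    (hub : letI := Classical.decRel G.Adj;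
      ∀ (t : ℝ) (x : Fin n → ℝ), x ≠ 0 → G.adjMatrix ℝ *ᵥ x = t • x → t ≤ μ) :
    graphEig G ⟨0, hn⟩ = μ := by
  letI := Classical.decRel G.Adj
  have hH : (G.adjMatrix ℝ).IsHermitian := by
    rw [Matrix.IsHermitian, conjTranspose_eq_transpose_of_trivial]
    exact G.isSymm_adjMatrix
  have hEq : graphEig G ⟨0, hn⟩
      = hH.eigenvalues (Tuple.sort hH.eigenvalues (Fin.rev ⟨0, hn⟩)) := rfl
  -- every eigenvalue is at most the value at the sorted last index
  have hmax : ∀ j, hH.eigenvalues j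
      ≤ hH.eigenvalues (Tuple.sort hH.eigenvalues (Fin.rev ⟨0, hn⟩)) := by
    intro j
    have h1 : (Tuple.sort hH.eigenvalues).symm j ≤ Fin.rev ⟨0, hn⟩ := by
      rw [Fin.le_def]
      have := ((Tuple.sort hH.eigenvalues).symm j).isLt
      simp only [Fin.val_rev]
      omega
    have h2 := Tuple.monotone_sort hH.eigenvalues h1
    simpa using h2
  apply le_antisymm
  · rw [hEq]
    set j := Tuple.sort hH.eigenvalues (Fin.rev ⟨0, hn⟩) with hj
    have hv := hH.mulVec_eigenvectorBasis j
    have hne : (⇑(hH.eigenvectorBasis j) : Fin n → ℝ) ≠ 0 := by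
      intro h
      exact hH.eigenvectorBasis.orthonormal.ne_zero j (by ext k; exact congrFun h k)
    exact hub _ _ hne hv
  · obtain ⟨x, hx0, hx1⟩ := hmem
    have h1 : Module.End.HasEigenvalue (Matrix.toLin' (G.adjMatrix ℝ)) μ :=
      Module.End.hasEigenvalue_of_hasEigenvector
        ⟨Module.End.mem_eigenspace_iff.mpr (by rw [Matrix.toLin'_apply, hx1]), hx0⟩
    have h2 : μ ∈ spectrum ℝ (G.adjMatrix ℝ) := by
      rw [← AlgEquiv.spectrum_eq (Matrix.toLinAlgEquiv (Pi.basisFun ℝ (Fin n)))]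
      have h3 := h1.mem_spectrum
      rwa [← Matrix.toLin_eq_toLin'] at h3
    rw [aux_spectrum_eq hH] at h2
    obtain ⟨i, hi⟩ := h2
    rw [hEq, ← hi]
    exact hmax i

section Split

variable {n r : ℕ}

lemma split_adj_iff (u v : Fin n) :
    (SimpleGraph.fromRel (fun u v : Fin n => (u : ℕ) < r ∨ (v : ℕ) < r)).Adj u v ↔
      u ≠ v ∧ ((u : ℕ) < r ∨ (v : ℕ) < r) := by
  simp only [fromRel_adj]
  tauto

lemma split_filter_card (hrn : r < n) :
    (Finset.univ.filter fun v : Fin n => (v : ℕ) < r).card = r := by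
  have h : (Finset.univ.filter fun v : Fin n => (v : ℕ) < r)
      = Finset.Iio (⟨r, hrn⟩ : Fin n) := by
    ext v
    simp [Fin.lt_def]
  rw [h, Fin.card_Iio]

lemma split_mulVec_lt
    [inst : DecidableRel (SimpleGraph.fromRel
      (fun u v : Fin n => (u : ℕ) < r ∨ (v : ℕ) < r)).Adj]
    (x : Fin n → ℝ) (u : Fin n) (hu : (u : ℕ) < r) :
    (((SimpleGraph.fromRel (fun u v : Fin n => (u : ℕ) < r ∨ (v : ℕ) < r)).adjMatrix ℝ)
      *ᵥ x) u = (∑ v, x v) - x u := by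
  rw [adjMatrix_mulVec_apply]
  have h : (SimpleGraph.fromRel
      (fun u v : Fin n => (u : ℕ) < r ∨ (v : ℕ) < r)).neighborFinset u
      = Finset.univ.erase u := by
    ext v
    simp [mem_neighborFinset, split_adj_iff, ne_comm, hu]
  rw [h, Finset.sum_erase_eq_sub (Finset.mem_univ u)]

lemma split_mulVec_ge
    [inst : DecidableRel (SimpleGraph.fromRel
      (fun u v : Fin n => (u : ℕ) < r ∨ (v : ℕ) < r)).Adj]
    (x : Fin n → ℝ) (u : Fin n) (hu : r ≤ (u : ℕ)) :
    (((SimpleGraph.fromRel (fun u v : Fin n => (u : ℕ) < r ∨ (v : ℕ) < r)).adjMatrix ℝ)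
      *ᵥ x) u = ∑ v ∈ Finset.univ.filter (fun v : Fin n => (v : ℕ) < r), x v := by
  rw [adjMatrix_mulVec_apply]
  congr 1
  ext v
  simp only [mem_neighborFinset, split_adj_iff, Finset.mem_filter, Finset.mem_univ, true_and]
  constructor
  · rintro ⟨hne, h | h⟩
    · omega
    · exact h
  · intro hv
    refine ⟨?_, Or.inr hv⟩
    intro h
    rw [h] at hu
    omega

end Split

theorem stmt16 (n r : ℕ) (hr1 : 1 ≤ r) (hrn : r < n) :
    graphEig (SimpleGraph.fromRel (fun u v : Fin n => (u : ℕ) < r ∨ (v : ℕ) < r))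
        ⟨0, by omega⟩ =
      ((r : ℝ) - 1) / 2 +
        Real.sqrt ((n : ℝ) * r - (3 * (r : ℝ) ^ 2 + 2 * r - 1) / 4) := by
  have hn : 0 < n := by omega
  set D : ℝ := (n : ℝ) * r - (3 * (r : ℝ) ^ 2 + 2 * r - 1) / 4 with hDdef
  have hnr : (r : ℝ) + 1 ≤ (n : ℝ) := by exact_mod_cast hrn
  have hr1' : (1 : ℝ) ≤ (r : ℝ) := by exact_mod_cast hr1
  have hDge : (((r : ℝ) + 1) / 2) ^ 2 ≤ D := by
    rw [hDdef]; nlinarith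
  have hD0 : 0 ≤ D := le_trans (by positivity) hDge
  have hs := Real.sq_sqrt hD0
  have hsq : Real.sqrt D ^ 2 = ((r : ℝ) - 1) ^ 2 / 4 + (r : ℝ) * ((n : ℝ) - r) := by
    rw [hs, hDdef]; ring
  have hsge : ((r : ℝ) + 1) / 2 ≤ Real.sqrt D := by
    rw [show ((r : ℝ) + 1) / 2 = Real.sqrt ((((r : ℝ) + 1) / 2) ^ 2) by
      rw [Real.sqrt_sq (by positivity)]]
    exact Real.sqrt_le_sqrt hDge
  set μ : ℝ := ((r : ℝ) - 1) / 2 + Real.sqrt D with hμdef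
  have hμ1 : (r : ℝ) ≤ μ := by rw [hμdef]; linarith
  have hμroot : μ ^ 2 - ((r : ℝ) - 1) * μ - r * ((n : ℝ) - r) = 0 := by
    rw [hμdef]; linear_combination hsq
  letI := Classical.decRel (SimpleGraph.fromRel
    (fun u v : Fin n => (u : ℕ) < r ∨ (v : ℕ) < r)).Adj
  set K : Finset (Fin n) := Finset.univ.filter (fun v : Fin n => (v : ℕ) < r) with hKdef
  have hKcard : K.card = r := split_filter_card hrn
  have hKccard : Kᶜ.card = n - r := by
    have := Finset.card_compl K
    rw [this, hKcard, Fintype.card_fin]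
  have hcompl : ∀ x : Fin n → ℝ, ∑ v, x v = (∑ v ∈ K, x v) + ∑ v ∈ Kᶜ, x v := by
    intro x
    rw [hKdef, Finset.compl_filter, Finset.sum_filter_add_sum_filter_not]
  apply graphEig_zero_eq _ hn
  · -- membership : explicit eigenvector
    refine ⟨fun u => if (u : ℕ) < r then μ else (r : ℝ), ?_, ?_⟩
    · intro h
      have h0 := congrFun h ⟨0, hn⟩
      simp only [Pi.zero_apply] at h0
      rw [if_pos (by show 0 < r; omega)] at h0
      linarith
    · set x : Fin n → ℝ := fun u => if (u : ℕ) < r then μ else (r : ℝ) with hxdef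
      have hsumK : ∑ v ∈ K, x v = (r : ℝ) * μ := by
        rw [Finset.sum_congr rfl (fun v hv => ?_), Finset.sum_const, hKcard,
          nsmul_eq_mul]
        rw [hKdef] at hv
        simp only [Finset.mem_filter] at hv
        rw [hxdef]; simp [hv.2]
      have hsumKc : ∑ v ∈ Kᶜ, x v = ((n : ℝ) - r) * r := by
        rw [Finset.sum_congr rfl (fun v hv => ?_), Finset.sum_const, hKccard,
          nsmul_eq_mul]
        · rw [Nat.cast_sub hrn.le]
        · rw [hKdef] at hv
          simp only [Finset.compl_filter, Finset.mem_filter] at hv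
          rw [hxdef]; simp [hv.2]
      funext u
      by_cases hu : (u : ℕ) < r
      · rw [split_mulVec_lt x u hu, hcompl x, hsumK, hsumKc]
        have hxu : x u = μ := by rw [hxdef]; simp [hu]
        rw [hxu]
        simp only [Pi.smul_apply, smul_eq_mul, hxu]
        nlinarith [hμroot]
      · rw [split_mulVec_ge x u (le_of_not_gt hu), ← hKdef, hsumK]
        have hxu : x u = (r : ℝ) := by rw [hxdef]; simp [hu]
        simp only [Pi.smul_apply, smul_eq_mul, hxu]
        ring
  · -- upper bound
    intro t x hx0 hx1
    have hxval : ∀ u : Fin n, ((SimpleGraph.fromRel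
        (fun u v : Fin n => (u : ℕ) < r ∨ (v : ℕ) < r)).adjMatrix ℝ *ᵥ x) u = t * x u := by
      intro u
      rw [hx1]; simp
    set a : ℝ := ∑ v ∈ K, x v with hadef
    set b : ℝ := ∑ v ∈ Kᶜ, x v with hbdef
    have heq1 : ∀ u : Fin n, (u : ℕ) < r → a + b - x u = t * x u := by
      intro u hu
      have := hxval u
      rwa [split_mulVec_lt x u hu, hcompl x, ← hadef, ← hbdef] at this
    have heq2 : ∀ u : Fin n, r ≤ (u : ℕ) → a = t * x u := by
      intro u hu
      have := hxval u
      rwa [split_mulVec_ge x u hu, ← hKdef, ← hadef] at this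
    by_cases ht0 : t = 0
    · rw [ht0]; linarith
    by_cases ht1 : t = -1
    · rw [ht1]; linarith
    -- key equations
    have hKa : (t + 1) * a = (r : ℝ) * (a + b) := by
      have : ∑ u ∈ K, (t + 1) * x u = ∑ u ∈ K, (a + b) := by
        refine Finset.sum_congr rfl (fun u hu => ?_)
        rw [hKdef] at hu
        simp only [Finset.mem_filter] at hu
        have := heq1 u hu.2
        linarith
      rw [Finset.sum_const, hKcard, nsmul_eq_mul] at this
      rw [← Finset.mul_sum, ← hadef] at this
      linarith [this]
    have hKb : t * b = ((n : ℝ) - r) * a := by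
      have : ∑ u ∈ Kᶜ, t * x u = ∑ u ∈ Kᶜ, a := by
        refine Finset.sum_congr rfl (fun u hu => ?_)
        rw [hKdef] at hu
        simp only [Finset.compl_filter, Finset.mem_filter] at hu
        exact (heq2 u (le_of_not_gt hu.2)).symm
      rw [Finset.sum_const, hKccard, nsmul_eq_mul, Nat.cast_sub hrn.le] at this
      rw [← Finset.mul_sum, ← hbdef] at this
      linarith [this]
    have ha0 : a ≠ 0 := by
      intro ha
      apply hx0
      have hb0 : b = 0 := by
        have := hKb
        rw [ha, mul_zero] at this
        rcases mul_eq_zero.mp this with h | h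
        · exact absurd h ht0
        · exact h
      funext u
      by_cases hu : (u : ℕ) < r
      · have := heq1 u hu
        rw [ha, hb0] at this
        have ht1' : t + 1 ≠ 0 := fun h => ht1 (by linarith)
        have : (t + 1) * x u = 0 := by linarith
        simpa [ht1'] using mul_eq_zero.mp this
      · have := heq2 u (le_of_not_gt hu)
        rw [ha] at this
        have : t * x u = 0 := this.symm
        simpa [ht0] using mul_eq_zero.mp this
    have hquad : t ^ 2 - ((r : ℝ) - 1) * t - r * ((n : ℝ) - r) = 0 := by
      have h2 : (t * (t + 1)) * a = ((r : ℝ) * t + r * ((n : ℝ) - r)) * a := by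
        linear_combination t * hKa + (r : ℝ) * hKb
      have h3 : t * (t + 1) = (r : ℝ) * t + r * ((n : ℝ) - r) :=
        mul_right_cancel₀ ha0 h2
      linear_combination h3
    -- conclude t ≤ μ
    have h4 : (t - ((r : ℝ) - 1) / 2) ^ 2 = Real.sqrt D ^ 2 := by
      linear_combination hquad - hsq
    have h5 : t - ((r : ℝ) - 1) / 2 ≤ Real.sqrt D := by
      nlinarith [h4, Real.sqrt_nonneg D]
    rw [hμdef]
    linarith
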